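/- Let G be a finite simple graph with vertex set V. For every vertex v: the sum over all vertices u ∈ V \ (Γ(v) ∪ {v}) of binomial( |Γ(v) ∩ Γ(u)|, 2 ) equals F7(v) + F9(v). -/

import Mathlib

open Finset
open scoped Classical

namespace FourProfiles

variable {V : Type*} [Fintype V] [DecidableEq V]

/-- Number of 3-element subsets of `V \ {v}` admitting a labeling `a, b, c` satisfying `P`. -/
noncomputable def cnt3 (v : V) (P : V → V → V → Prop) : ℕ :=
  (((Finset.univ : Finset V).powersetCard 3).filter
    (fun s => v ∉ s ∧ ∃ a ∈ s, ∃ b ∈ s, ∃ c ∈ s, s = {a, b, c} ∧ P a b c)).card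

variable (G : SimpleGraph V)

/-- Induced subgraph on `{v,a,b,c}` has exactly one edge, with `v` an endpoint. -/
noncomputable def F1 (v : V) : ℕ := cnt3 v fun a b c =>
  G.Adj v a ∧ ¬G.Adj v b ∧ ¬G.Adj v c ∧ ¬G.Adj a b ∧ ¬G.Adj a c ∧ ¬G.Adj b c

/-- Induced subgraph on `{v,a,b,c}` is a perfect matching (two disjoint edges). -/
noncomputable def F2 (v : V) : ℕ := cnt3 v fun a b c =>
  G.Adj v a ∧ G.Adj b c ∧ ¬G.Adj v b ∧ ¬G.Adj v c ∧ ¬G.Adj a b ∧ ¬G.Adj a c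

/-- Two-edge path plus isolated vertex, `v` an endpoint of the path. -/
noncomputable def F3 (v : V) : ℕ := cnt3 v fun a b c =>
  G.Adj v a ∧ G.Adj a b ∧ ¬G.Adj v b ∧ ¬G.Adj v c ∧ ¬G.Adj a c ∧ ¬G.Adj b c

/-- Two-edge path plus isolated vertex, `v` the middle vertex of the path. -/
noncomputable def F3' (v : V) : ℕ := cnt3 v fun a b c =>
  G.Adj v a ∧ G.Adj v b ∧ ¬G.Adj a b ∧ ¬G.Adj v c ∧ ¬G.Adj a c ∧ ¬G.Adj b c

/-- Path on four vertices, `v` an endpoint. -/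
noncomputable def F4 (v : V) : ℕ := cnt3 v fun a b c =>
  G.Adj v a ∧ G.Adj a b ∧ G.Adj b c ∧ ¬G.Adj v b ∧ ¬G.Adj v c ∧ ¬G.Adj a c

/-- Path on four vertices, `v` an internal (degree-2) vertex. -/
noncomputable def F4' (v : V) : ℕ := cnt3 v fun a b c =>
  G.Adj v a ∧ G.Adj v b ∧ G.Adj b c ∧ ¬G.Adj a b ∧ ¬G.Adj v c ∧ ¬G.Adj a c

/-- Triangle plus isolated vertex, `v` in the triangle. -/
noncomputable def F5 (v : V) : ℕ := cnt3 v fun a b c =>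
  G.Adj v a ∧ G.Adj v b ∧ G.Adj a b ∧ ¬G.Adj v c ∧ ¬G.Adj a c ∧ ¬G.Adj b c

/-- Star `K_{1,3}`, `v` a leaf. -/
noncomputable def F6 (v : V) : ℕ := cnt3 v fun a b c =>
  G.Adj v a ∧ G.Adj a b ∧ G.Adj a c ∧ ¬G.Adj v b ∧ ¬G.Adj v c ∧ ¬G.Adj b c

/-- Star `K_{1,3}`, `v` the center. -/
noncomputable def F6' (v : V) : ℕ := cnt3 v fun a b c =>
  G.Adj v a ∧ G.Adj v b ∧ G.Adj v c ∧ ¬G.Adj a b ∧ ¬G.Adj a c ∧ ¬G.Adj b c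

/-- 4-cycle. -/
noncomputable def F7 (v : V) : ℕ := cnt3 v fun a b c =>
  G.Adj v a ∧ G.Adj a b ∧ G.Adj b c ∧ G.Adj v c ∧ ¬G.Adj v b ∧ ¬G.Adj a c

/-- Paw (triangle with a pendant edge), `v` the pendant (degree-1) vertex. -/
noncomputable def F8 (v : V) : ℕ := cnt3 v fun a b c =>
  G.Adj v a ∧ G.Adj a b ∧ G.Adj a c ∧ G.Adj b c ∧ ¬G.Adj v b ∧ ¬G.Adj v c

/-- Paw, `v` the degree-3 vertex. -/
noncomputable def F8' (v : V) : ℕ := cnt3 v fun a b c =>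
  G.Adj v a ∧ G.Adj v b ∧ G.Adj a b ∧ G.Adj v c ∧ ¬G.Adj a c ∧ ¬G.Adj b c

/-- Paw, `v` one of the two degree-2 vertices. -/
noncomputable def F8'' (v : V) : ℕ := cnt3 v fun a b c =>
  G.Adj v a ∧ G.Adj v b ∧ G.Adj a b ∧ G.Adj a c ∧ ¬G.Adj v c ∧ ¬G.Adj b c

/-- Diamond (`K4` minus one edge), `v` one of the two degree-2 vertices. -/
noncomputable def F9 (v : V) : ℕ := cnt3 v fun a b c =>
  G.Adj v a ∧ G.Adj v b ∧ G.Adj a b ∧ G.Adj a c ∧ G.Adj b c ∧ ¬G.Adj v c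

/-- Diamond, `v` one of the two degree-3 vertices. -/
noncomputable def F9' (v : V) : ℕ := cnt3 v fun a b c =>
  G.Adj v a ∧ G.Adj v b ∧ G.Adj v c ∧ G.Adj a b ∧ G.Adj a c ∧ ¬G.Adj b c

/-- Complete graph `K4`. -/
noncomputable def F10 (v : V) : ℕ := cnt3 v fun a b c =>
  G.Adj v a ∧ G.Adj v b ∧ G.Adj v c ∧ G.Adj a b ∧ G.Adj a c ∧ G.Adj b c

/-- `|V \ (Γ(v) ∪ Γ(a))|`. -/
noncomputable def n1e (v a : V) : ℕ :=
  (Finset.univ.filter fun x => ¬G.Adj v x ∧ ¬G.Adj a x).card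

/-- `|Γ(v) \ (Γ(a) ∪ {a})|`. -/
noncomputable def n2c (v a : V) : ℕ :=
  (Finset.univ.filter fun x => G.Adj v x ∧ ¬G.Adj a x ∧ x ≠ a).card

/-- `|Γ(a) \ (Γ(v) ∪ {v})|`. -/
noncomputable def n2e (v a : V) : ℕ :=
  (Finset.univ.filter fun x => G.Adj a x ∧ ¬G.Adj v x ∧ x ≠ v).card

/-- `|Γ(v) ∩ Γ(a)|`. -/
noncomputable def n3 (v a : V) : ℕ :=
  (Finset.univ.filter fun x => G.Adj v x ∧ G.Adj a x).card

/-- Number of edges of `G` with neither endpoint in `Γ(v) ∪ {v}`. -/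
noncomputable def n1d (v : V) : ℕ :=
  (((Finset.univ : Finset V).powersetCard 2).filter
    (fun s => ∃ a ∈ s, ∃ b ∈ s, s = {a, b} ∧ G.Adj a b ∧
      ¬G.Adj v a ∧ ¬G.Adj v b ∧ a ≠ v ∧ b ≠ v)).card

/-- Number of triangles of `G` containing `a`. -/
noncomputable def tri (a : V) : ℕ :=
  (((Finset.univ : Finset V).powersetCard 2).filter
    (fun s => ∃ x ∈ s, ∃ y ∈ s, s = {x, y} ∧ G.Adj a x ∧ G.Adj a y ∧ G.Adj x y)).card

/-- Number of 2-element subsets `{x,y}` of `V \ {a}` inducing a two-edge path with `a`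
an endpoint. -/
noncomputable def twoPathEnd (a : V) : ℕ :=
  (((Finset.univ : Finset V).powersetCard 2).filter
    (fun s => a ∉ s ∧ ∃ x ∈ s, ∃ y ∈ s, s = {x, y} ∧ G.Adj a x ∧ G.Adj x y ∧ ¬G.Adj a y)).card

/-- Number of 2-element subsets `{b,c} ⊆ Γ(a)` with `b` adjacent to `c`, `b ∈ Γ(v)`,
`c ∈ Γ(v)`. -/
noncomputable def triIn (v a : V) : ℕ :=
  (((Finset.univ : Finset V).powersetCard 2).filter
    (fun s => ∃ b ∈ s, ∃ c ∈ s, s = {b, c} ∧ G.Adj a b ∧ G.Adj a c ∧ G.Adj b c ∧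
      G.Adj v b ∧ G.Adj v c)).card

/-- Number of 2-element subsets `{b,c} ⊆ Γ(a)` with `b` adjacent to `c`, `b ∉ Γ(v)`,
`c ∉ Γ(v)`. -/
noncomputable def triOut (v a : V) : ℕ :=
  (((Finset.univ : Finset V).powersetCard 2).filter
    (fun s => ∃ b ∈ s, ∃ c ∈ s, s = {b, c} ∧ G.Adj a b ∧ G.Adj a c ∧ G.Adj b c ∧
      ¬G.Adj v b ∧ ¬G.Adj v c)).card

lemma card3_ne {a b c : V} (h : ({a, b, c} : Finset V).card = 3) :
    a ≠ b ∧ a ≠ c ∧ b ≠ c := by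
  have key : ∀ x y : V, ({x, y} : Finset V).card ≤ 2 := fun x y =>
    (Finset.card_insert_le x {y}).trans (by simp)
  refine ⟨?_, ?_, ?_⟩ <;> rintro rfl
  · rw [Finset.insert_idem] at h; have := key a c; omega
  · rw [Finset.insert_comm, Finset.pair_eq_singleton] at h; have := key b a; omega
  · rw [Finset.pair_eq_singleton] at h; have := key a b; omega

set_option maxHeartbeats 1000000 in
theorem statement18 [DecidableRel G.Adj] (v : V) :
    ∑ u ∈ Finset.univ \ (G.neighborFinset v ∪ {v}), Nat.choose (n3 G v u) 2 =
      F7 G v + F9 G v := by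
  classical
  set S : Finset V := Finset.univ \ (G.neighborFinset v ∪ {v}) with hS
  have hSmem : ∀ u, u ∈ S ↔ ¬G.Adj v u ∧ u ≠ v := by
    intro u; simp [hS, SimpleGraph.mem_neighborFinset]; tauto
  set P : V → Finset (Finset V) :=
    fun u => (Finset.univ.filter fun x => G.Adj v x ∧ G.Adj u x).powersetCard 2 with hP
  have h1 : ∀ u, Nat.choose (n3 G v u) 2 = (P u).card := by
    intro u; rw [hP]; simp only [Finset.card_powersetCard]
    unfold n3; congr 1; congr 1
    exact Finset.filter_congr_decidable _ _ _
  simp only [h1]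
  rw [← Finset.card_sigma]
  set T := S.sigma P with hT
  have hTmem : ∀ q : (_ : V) × Finset V, q ∈ T ↔
      (¬G.Adj v q.1 ∧ q.1 ≠ v) ∧
      (∀ x ∈ q.2, G.Adj v x ∧ G.Adj q.1 x) ∧ q.2.card = 2 := by
    intro q
    rw [hT, Finset.mem_sigma, hSmem, hP, Finset.mem_powersetCard]
    constructor
    · rintro ⟨h1, h2, h3⟩
      exact ⟨h1, fun x hx => by simpa using h2 hx, h3⟩
    · rintro ⟨h1, h2, h3⟩
      exact ⟨h1, fun x hx => by simpa using h2 x hx, h3⟩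
  set Q : (_ : V) × Finset V → Prop :=
    fun q => ∀ b ∈ q.2, ∀ c ∈ q.2, b ≠ c → G.Adj b c with hQ
  rw [← Finset.card_filter_add_card_filter_not (s := T) (p := Q)]
  have h7 : (T.filter fun q => ¬ Q q).card = F7 G v := by
    rw [F7, cnt3]
    apply Finset.card_bij (fun q _ => insert q.1 q.2)
    · rintro ⟨u, p⟩ hq
      rw [Finset.mem_filter, hTmem] at hq
      obtain ⟨⟨⟨hvu, huv⟩, hsub, hcard⟩, hnQ⟩ := hq
      obtain ⟨b, c, hbc, rfl⟩ := Finset.card_eq_two.mp hcard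
      obtain ⟨hvb, hub⟩ := hsub b (by simp)
      obtain ⟨hvc, huc⟩ := hsub c (by simp)
      have hnbc : ¬ G.Adj b c := by
        by_contra hadj
        apply hnQ
        intro x hx y hy hxy
        simp only [Finset.mem_insert, Finset.mem_singleton] at hx hy
        rcases hx with rfl | rfl <;> rcases hy with rfl | rfl <;>
          first | exact absurd rfl hxy | exact hadj | exact hadj.symm
      have hunb : u ∉ ({b, c} : Finset V) := by
        simp only [Finset.mem_insert, Finset.mem_singleton]
        rintro (rfl | rfl) <;> exact hvu (by assumption)
      simp only [Finset.mem_filter, Finset.mem_powersetCard]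
      refine ⟨⟨Finset.subset_univ _, ?_⟩, ?_, b, by simp, u, by simp, c, by simp, ?_, ?_⟩
      · rw [Finset.card_insert_of_notMem hunb, Finset.card_pair hbc]
      · simp only [Finset.mem_insert, Finset.mem_singleton]
        push_neg
        exact ⟨fun h => huv h.symm, G.ne_of_adj hvb, G.ne_of_adj hvc⟩
      · ext x; simp only [Finset.mem_insert, Finset.mem_singleton]; tauto
      · exact ⟨hvb, hub.symm, huc, hvc, hvu, hnbc⟩
    · rintro ⟨u, p⟩ hq ⟨u', p'⟩ hq' heq
      rw [Finset.mem_filter, hTmem] at hq hq'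
      obtain ⟨⟨⟨hvu, -⟩, hsub, -⟩, -⟩ := hq
      obtain ⟨⟨⟨hvu', -⟩, hsub', -⟩, -⟩ := hq'
      have hup : u ∉ p := fun h => hvu (hsub u h).1
      have hup' : u' ∉ p' := fun h => hvu' (hsub' u' h).1
      have huu : u = u' := by
        have : u' ∈ insert u p := heq ▸ Finset.mem_insert_self u' p'
        rcases Finset.mem_insert.mp this with h | h
        · exact h.symm
        · exact absurd (hsub u' h).1 hvu'
      subst huu
      have hpp : p = p' := by
        rw [← Finset.erase_insert hup, ← Finset.erase_insert hup', heq]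
      subst hpp; rfl
    · intro s hs
      simp only [Finset.mem_filter, Finset.mem_powersetCard] at hs
      obtain ⟨⟨-, hcard3⟩, hvs, a, ha, b, hb, c, hc, rfl, hva, hab, hbc, hvc, hnvb, hnac⟩ := hs
      obtain ⟨hab', hac', hbc'⟩ := card3_ne hcard3
      refine ⟨⟨b, {a, c}⟩, ?_, ?_⟩
      · simp only [Finset.mem_filter]
        rw [hTmem]
        refine ⟨⟨⟨hnvb, fun h => hvs (h ▸ hb)⟩, ?_, Finset.card_pair hac'⟩, ?_⟩
        · intro x hx
          simp only [Finset.mem_insert, Finset.mem_singleton] at hx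
          rcases hx with rfl | rfl
          · exact ⟨hva, hab.symm⟩
          · exact ⟨hvc, hbc⟩
        · intro hQall
          exact hnac (hQall a (by simp) c (by simp) hac')
      · ext x; simp only [Finset.mem_insert, Finset.mem_singleton]; tauto
  have h9 : (T.filter Q).card = F9 G v := by
    rw [F9, cnt3]
    apply Finset.card_bij (fun q _ => insert q.1 q.2)
    · rintro ⟨u, p⟩ hq
      rw [Finset.mem_filter, hTmem] at hq
      obtain ⟨⟨⟨hvu, huv⟩, hsub, hcard⟩, hQall⟩ := hq
      obtain ⟨b, c, hbc, rfl⟩ := Finset.card_eq_two.mp hcard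
      obtain ⟨hvb, hub⟩ := hsub b (by simp)
      obtain ⟨hvc, huc⟩ := hsub c (by simp)
      have hadjbc : G.Adj b c := hQall b (by simp) c (by simp) hbc
      have hunb : u ∉ ({b, c} : Finset V) := by
        simp only [Finset.mem_insert, Finset.mem_singleton]
        rintro (rfl | rfl) <;> exact hvu (by assumption)
      simp only [Finset.mem_filter, Finset.mem_powersetCard]
      refine ⟨⟨Finset.subset_univ _, ?_⟩, ?_, b, by simp, c, by simp, u, by simp, ?_, ?_⟩
      · rw [Finset.card_insert_of_notMem hunb, Finset.card_pair hbc]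
      · simp only [Finset.mem_insert, Finset.mem_singleton]
        push_neg
        exact ⟨fun h => huv h.symm, G.ne_of_adj hvb, G.ne_of_adj hvc⟩
      · ext x; simp only [Finset.mem_insert, Finset.mem_singleton]; tauto
      · exact ⟨hvb, hvc, hadjbc, hub.symm, huc.symm, hvu⟩
    · rintro ⟨u, p⟩ hq ⟨u', p'⟩ hq' heq
      rw [Finset.mem_filter, hTmem] at hq hq'
      obtain ⟨⟨⟨hvu, -⟩, hsub, -⟩, -⟩ := hq
      obtain ⟨⟨⟨hvu', -⟩, hsub', -⟩, -⟩ := hq'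
      have hup : u ∉ p := fun h => hvu (hsub u h).1
      have hup' : u' ∉ p' := fun h => hvu' (hsub' u' h).1
      have huu : u = u' := by
        have : u' ∈ insert u p := heq ▸ Finset.mem_insert_self u' p'
        rcases Finset.mem_insert.mp this with h | h
        · exact h.symm
        · exact absurd (hsub u' h).1 hvu'
      subst huu
      have hpp : p = p' := by
        rw [← Finset.erase_insert hup, ← Finset.erase_insert hup', heq]
      subst hpp; rfl
    · intro s hs
      simp only [Finset.mem_filter, Finset.mem_powersetCard] at hs
      obtain ⟨⟨-, hcard3⟩, hvs, a, ha, b, hb, c, hc, rfl, hva, hvb, hab, hac, hbc, hnvc⟩ := hs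
      obtain ⟨hab', hac', hbc'⟩ := card3_ne hcard3
      refine ⟨⟨c, {a, b}⟩, ?_, ?_⟩
      · simp only [Finset.mem_filter]
        rw [hTmem]
        refine ⟨⟨⟨hnvc, fun h => hvs (h ▸ hc)⟩, ?_, Finset.card_pair hab'⟩, ?_⟩
        · intro x hx
          simp only [Finset.mem_insert, Finset.mem_singleton] at hx
          rcases hx with rfl | rfl
          · exact ⟨hva, hac.symm⟩
          · exact ⟨hvb, hbc.symm⟩
        · intro x hx y hy hxy
          simp only [Finset.mem_insert, Finset.mem_singleton] at hx hy
          rcases hx with rfl | rfl <;> rcases hy with rfl | rfl <;>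
            first | exact absurd rfl hxy | exact hab | exact hab.symm
      · ext x; simp only [Finset.mem_insert, Finset.mem_singleton]; tauto
  rw [h7, h9, Nat.add_comm]


end FourProfiles
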